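/- Let A be a bicomplete abelian category (having all small limits and colimits), and let (𝒳, 𝒴) be a cotorsion pair of chain complexes over A, meaning 𝒳 = { X : Ext^1(X,Y) = 0 for all Y ∈ 𝒴 } and 𝒴 = { Y : Ext^1(X,Y) = 0 for all X ∈ 𝒳 }, where Ext^1 is computed in the abelian category Ch(A) of chain complexes over A. Let 𝒞 be a class of objects of A. If the disk complexes D^n(C) lie in 𝒳 for every integer n and every C ∈ 𝒞, then every bounded above acyclic chain complex all of whose cycle objects lie in 𝒞 is also in 𝒳. -/

import Mathlib

/-!
STATEMENT 5: Let `A` be a bicomplete abelian category and `(𝒳, 𝒴)` a cotorsion pair in the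
category of `ℤ`-indexed chain complexes over `A` (each class is the `Ext¹`-orthogonal of the
other, `Ext¹` computed in `Ch(A)`).  Let `𝒞` be a class of objects of `A`.  If `D^n C ∈ 𝒳`
for all `n : ℤ` and `C ∈ 𝒞`, then every bounded above acyclic complex all of whose cycle
objects lie in `𝒞` is in `𝒳`.

The vanishing of the (Yoneda) group `Ext¹(A, B)` is expressed by the (equivalent)
statement that every short exact sequence `0 → B → E → A → 0` splits.
-/

universe v u

open CategoryTheory Limits ZeroObject

/-- Vanishing of (Yoneda) `Ext¹(A, B)` in an abelian category: every short exact
sequence `0 → B → E → A → 0` splits. -/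
def Ext1Vanishes {C : Type*} [Category C] [Abelian C] (A B : C) : Prop :=
  ∀ (E : C) (f : B ⟶ E) (g : E ⟶ A) (w : f ≫ g = 0),
    (ShortComplex.mk f g w).ShortExact → ∃ s : A ⟶ E, s ≫ g = 𝟙 A

section GeneralAbelian

variable {B : Type*} [Category B] [Abelian B]

lemma shortExact_pushout {Z W Z' Y P : B} (ι : Z ⟶ W) (π : W ⟶ Z') (hw : ι ≫ π = 0)
    (hS : (ShortComplex.mk ι π hw).ShortExact) (v : Z ⟶ Y) (inl : Y ⟶ P) (inr : W ⟶ P)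
    (hP : IsPushout v ι inl inr) (g : P ⟶ Z') (hg1 : inl ≫ g = 0) (hg2 : inr ≫ g = π) :
    (ShortComplex.mk inl g hg1).ShortExact := by
  have hmι : Mono ι := hS.mono_f
  have heπ : Epi π := hS.epi_g
  have hmono : Mono inl := by
    rw [← hP.inl_isoPushout_inv]
    exact mono_comp _ _
  have hepi : Epi g := epi_of_epi_fac hg2
  refine ShortComplex.ShortExact.mk' ?_ hmono hepi
  apply ShortComplex.exact_of_g_is_cokernel
  refine CokernelCofork.IsColimit.ofπ' g hg1 (fun {T} t ht => ?_)
  have h0 : ι ≫ inr ≫ t = 0 := by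
    rw [← reassoc_of% hP.w, ht, comp_zero]
  obtain ⟨u, hu⟩ := CokernelCofork.IsColimit.desc' hS.gIsCokernel (inr ≫ t) h0
  dsimp at hu
  refine ⟨u, hP.hom_ext ?_ ?_⟩
  · rw [reassoc_of% hg1, zero_comp, ht]
  · rw [reassoc_of% hg2, hu]

lemma Ext1Vanishes.retraction {Z W : B} (h : Ext1Vanishes Z W)
    {E : B} (f : W ⟶ E) (g : E ⟶ Z) (w : f ≫ g = 0)
    (hS : (ShortComplex.mk f g w).ShortExact) : ∃ r : E ⟶ W, f ≫ r = 𝟙 W := by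
  obtain ⟨s, hs⟩ := h E f g w hS
  exact ⟨(ShortComplex.Splitting.ofExactOfSection _ hS.exact s hs hS.mono_f).r,
    (ShortComplex.Splitting.ofExactOfSection _ hS.exact s hs hS.mono_f).f_r⟩

lemma section_of_retraction {Y E X0 : B} (f : Y ⟶ E) (p : E ⟶ X0) (w : f ≫ p = 0)
    (hS : (ShortComplex.mk f p w).ShortExact) (r : E ⟶ Y) (hr : f ≫ r = 𝟙 Y) :
    ∃ s : X0 ⟶ E, s ≫ p = 𝟙 X0 :=
  ⟨(ShortComplex.Splitting.ofExactOfRetraction _ hS.exact r hr hS.epi_g).s,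
    (ShortComplex.Splitting.ofExactOfRetraction _ hS.exact r hr hS.epi_g).s_g⟩

/-- Extension of morphisms along a mono with `Ext¹`-trivial cokernel. -/
lemma lift_of_ext {Z W Z' Y : B} (ι : Z ⟶ W) (π : W ⟶ Z') (hw : ι ≫ π = 0)
    (hS : (ShortComplex.mk ι π hw).ShortExact) (hext : Ext1Vanishes Z' Y) (v : Z ⟶ Y) :
    ∃ w : W ⟶ Y, ι ≫ w = v := by
  have hmι : Mono ι := hS.mono_f
  have hSE := shortExact_pushout ι π hw hS v (pushout.inl v ι) (pushout.inr v ι)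
    (IsPushout.of_hasPushout v ι)
    (pushout.desc 0 π (by rw [comp_zero, hw]))
    (by rw [pushout.inl_desc]) (by rw [pushout.inr_desc])
  obtain ⟨r, hr⟩ := hext.retraction _ _ _ hSE
  refine ⟨pushout.inr v ι ≫ r, ?_⟩
  have hc : ι ≫ pushout.inr v ι = v ≫ pushout.inl v ι := pushout.condition.symm
  rw [← Category.assoc, hc, Category.assoc, hr, Category.comp_id]

lemma shortExact_pullback {Y E Q Z : B} (f : Y ⟶ E) (p : E ⟶ Q) (w : f ≫ p = 0)
    (hS : (ShortComplex.mk f p w).ShortExact) (ι : Z ⟶ Q) :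
    (ShortComplex.mk (pullback.lift f 0 (by rw [w, zero_comp]) : Y ⟶ pullback p ι)
      (pullback.snd p ι) (by rw [pullback.lift_snd])).ShortExact := by
  have hmf : Mono f := hS.mono_f
  have hep : Epi p := hS.epi_g
  have hmono : Mono (pullback.lift f 0 (by rw [w, zero_comp]) : Y ⟶ pullback p ι) :=
    mono_of_mono_fac (pullback.lift_fst (f := p) (g := ι) f 0 (by rw [w, zero_comp]))
  have hepi : Epi (pullback.snd p ι) := inferInstance
  refine ShortComplex.ShortExact.mk' ?_ hmono hepi
  apply ShortComplex.exact_of_f_is_kernel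
  refine KernelFork.IsLimit.ofι' _ _ (fun {T} t ht => ?_)
  have h0 : (t ≫ pullback.fst p ι) ≫ p = 0 := by
    rw [Category.assoc, pullback.condition, reassoc_of% ht, zero_comp]
  obtain ⟨u, hu⟩ := KernelFork.IsLimit.lift' hS.fIsKernel (t ≫ pullback.fst p ι) h0
  dsimp at hu
  refine ⟨u, pullback.hom_ext ?_ ?_⟩
  · rw [Category.assoc, pullback.lift_fst, hu]
  · dsimp
    rw [Category.assoc, pullback.lift_snd, comp_zero]
    exact ht.symm

/-- If the subobject and quotient of a two-step filtration of `X0` are `Ext¹`-orthogonal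
to `Y`, then any extension of `X0` by `Y` splits. -/
lemma section_of_ext {Y E X0 Z Z' : B} (f : Y ⟶ E) (p : E ⟶ X0) (w1 : f ≫ p = 0)
    (hS : (ShortComplex.mk f p w1).ShortExact)
    (ι : Z ⟶ X0) (π : X0 ⟶ Z') (w2 : ι ≫ π = 0)
    (hT : (ShortComplex.mk ι π w2).ShortExact)
    (e1 : Ext1Vanishes Z Y) (e2 : Ext1Vanishes Z' Y) :
    ∃ s : X0 ⟶ E, s ≫ p = 𝟙 X0 := by
  have hmf : Mono f := hS.mono_f
  have hep : Epi p := hS.epi_g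
  have hmι : Mono ι := hT.mono_f
  obtain ⟨s₁, hs₁⟩ := e1 _ _ _ _ (shortExact_pullback f p w1 hS ι)
  set ℓ : Z ⟶ E := s₁ ≫ pullback.fst p ι with hℓ
  have hℓp : ℓ ≫ p = ι := by
    rw [hℓ, Category.assoc, pullback.condition, ← Category.assoc,
      show s₁ ≫ pullback.snd p ι = 𝟙 Z from hs₁, Category.id_comp]
  have hmℓ : Mono ℓ := by
    have : Mono (ℓ ≫ p) := by rw [hℓp]; infer_instance
    exact mono_of_mono ℓ p
  set q : E ⟶ cokernel ℓ := cokernel.π ℓ with hq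
  have hℓπ : ℓ ≫ p ≫ π = 0 := by rw [← Category.assoc, hℓp, w2]
  set pbar : cokernel ℓ ⟶ Z' := cokernel.desc ℓ (p ≫ π) hℓπ with hpbar
  have hfq0 : (f ≫ q) ≫ pbar = 0 := by
    rw [Category.assoc, hpbar, cokernel.π_desc, ← Category.assoc, w1, zero_comp]
  have hmfq : Mono (f ≫ q) := by
    rw [Preadditive.mono_iff_cancel_zero]
    intro T t ht
    rw [← Category.assoc] at ht
    have := Abelian.monoLift_comp ℓ (t ≫ f) ht
    have h2 : (Abelian.monoLift ℓ (t ≫ f) ht ≫ ℓ) ≫ p = (t ≫ f) ≫ p := by rw [this]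
    rw [Category.assoc, hℓp, Category.assoc, w1, comp_zero] at h2
    have h3 : Abelian.monoLift ℓ (t ≫ f) ht = 0 := by
      rw [← cancel_mono ι]; rw [h2]; simp
    rw [h3, zero_comp] at this
    have h4 : t ≫ f = 0 := this.symm
    rw [← cancel_mono f, zero_comp]; exact h4
  have hepbar : Epi pbar := by
    have : q ≫ pbar = p ≫ π := by rw [hq, hpbar, cokernel.π_desc]
    have hppi : Epi (p ≫ π) := by have := hT.epi_g; exact epi_comp p π
    exact epi_of_epi_fac this
  have hSE : (ShortComplex.mk (f ≫ q) pbar hfq0).ShortExact := by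
    refine ShortComplex.ShortExact.mk' ?_ hmfq hepbar
    apply ShortComplex.exact_of_g_is_cokernel
    refine CokernelCofork.IsColimit.ofπ' _ _ (fun {T} t ht => ?_)
    rw [Category.assoc] at ht
    obtain ⟨u₁, hu₁⟩ := CokernelCofork.IsColimit.desc' hS.gIsCokernel (q ≫ t) ht
    dsimp at hu₁
    have hιu₁ : ι ≫ u₁ = 0 := by
      have h5 : ℓ ≫ q = 0 := cokernel.condition ℓ
      rw [← hℓp, Category.assoc, hu₁, ← Category.assoc, h5, zero_comp]
    obtain ⟨u, hu⟩ := CokernelCofork.IsColimit.desc' hT.gIsCokernel u₁ hιu₁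
    dsimp at hu
    refine ⟨u, ?_⟩
    have h6 : q ≫ pbar = p ≫ π := cokernel.π_desc ℓ (p ≫ π) hℓπ
    rw [← cancel_epi q, ← Category.assoc, h6, Category.assoc, hu, hu₁]
  obtain ⟨r, hrr⟩ := e2.retraction _ _ _ hSE
  exact section_of_retraction f p w1 hS (q ≫ r) (by rw [← Category.assoc]; exact hrr)

lemma epi_toCycles_of_exactAt (K : ChainComplex B ℤ) (n : ℤ) (h : K.ExactAt (n - 1)) :
    Epi (K.toCycles n (n - 1)) := by
  have hck := K.homologyIsCokernel n (n - 1) (by simp)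
  rw [Preadditive.epi_iff_cancel_zero]
  intro T g hg
  obtain ⟨u, hu⟩ := CokernelCofork.IsColimit.desc' hck g hg
  have hz : IsZero (K.homology (n - 1)) := (K.exactAt_iff_isZero_homology (n - 1)).1 h
  rw [← hu, hz.eq_of_src u 0, comp_zero]

lemma iCycles_comp_toCycles (K : ChainComplex B ℤ) (n : ℤ) :
    K.iCycles n ≫ K.toCycles n (n - 1) = 0 := by
  rw [← cancel_mono (K.iCycles (n - 1))]
  simp

/-- The short exact sequence `0 ⟶ Zₙ ⟶ Xₙ ⟶ Zₙ₋₁ ⟶ 0` of an acyclic complex. -/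
lemma cycles_shortExact (K : ChainComplex B ℤ) (n : ℤ) (h : K.ExactAt (n - 1)) :
    (ShortComplex.mk (K.iCycles n) (K.toCycles n (n - 1))
      (iCycles_comp_toCycles K n)).ShortExact := by
  have hepi := epi_toCycles_of_exactAt K n h
  refine ShortComplex.ShortExact.mk' ?_ (by dsimp; infer_instance) hepi
  apply ShortComplex.exact_of_f_is_kernel
  refine KernelFork.IsLimit.ofι' _ _ (fun {T} t ht => ?_)
  have htd : t ≫ K.d n (n - 1) = 0 := by
    rw [← K.toCycles_i n (n - 1), ← Category.assoc, ht, zero_comp]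
  exact KernelFork.IsLimit.lift' (K.cyclesIsKernel n (n - 1) (by simp)) t htd

lemma isZero_cycles_of_isZero (K : ChainComplex B ℤ) (n : ℤ) (h : IsZero (K.X (n + 1)))
    (hex : K.ExactAt n) : IsZero (K.cycles n) := by
  have : Epi (K.toCycles (n + 1) ((n + 1) - 1)) :=
    epi_toCycles_of_exactAt K (n + 1) (by simpa using hex)
  have e : n + 1 - 1 = n := by omega
  exact e ▸ (IsZero.of_epi (K.toCycles (n + 1) (n + 1 - 1)) h)

end GeneralAbelian

variable {A : Type u} [Category.{v} A] [Abelian A]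

/-- Components of the disk complex. -/
noncomputable def diskX (n : ℤ) (C : A) : ℤ → A := fun k => if k = n ∨ k = n - 1 then C else 0

/-- The disk complex `D^n C`: `C` in degrees `n` and `n - 1`, with identity differential. -/
noncomputable def disk (n : ℤ) (C : A) : ChainComplex A ℤ where
  X := diskX n C
  d i j :=
    if h : i = n ∧ j = n - 1 then
      eqToHom (show diskX n C i = diskX n C j by
        simp [diskX, h.1, h.2, show ¬ (n - 1 = n) by omega])
    else 0
  shape i j hij := by
    try dsimp only
    rw [dif_neg]
    rintro ⟨rfl, rfl⟩
    exact hij (by simp [ComplexShape.down_Rel])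
  d_comp_d' i j k _ _ := by
    try dsimp only
    by_cases h1 : i = n ∧ j = n - 1
    · rw [dif_pos h1, dif_neg, comp_zero]
      rintro ⟨h2, -⟩
      obtain ⟨-, h3⟩ := h1
      omega
    · rw [dif_neg h1, zero_comp]

lemma diskX_eq {n k : ℤ} (C0 : A) (h : k = n ∨ k = n - 1) : diskX n C0 k = C0 := by
  unfold diskX; rw [if_pos h]

lemma diskX_isZero {n k : ℤ} (C0 : A) (h : ¬(k = n ∨ k = n - 1)) : IsZero (diskX n C0 k) := by
  unfold diskX; rw [if_neg h]; exact isZero_zero A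

lemma disk_d_eq_zero {n : ℤ} (C0 : A) {i j : ℤ} (h : ¬(i = n ∧ j = n - 1)) :
    (disk n C0).d i j = 0 := by
  show dite _ _ _ = 0
  exact dif_neg h

lemma disk_d_eq {n : ℤ} (C0 : A) {i j : ℤ} (h : i = n ∧ j = n - 1) :
    (disk n C0).d i j = eqToHom (show diskX n C0 i = diskX n C0 j by
      rw [diskX_eq C0 (Or.inl h.1), diskX_eq C0 (Or.inr h.2)]) := by
  show dite _ _ _ = _
  exact dif_pos h

/-- Functoriality of disks. -/
noncomputable def diskMap (n : ℤ) {B0 C0 : A} (φ : B0 ⟶ C0) : disk n B0 ⟶ disk n C0 where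
  f k := if h : k = n ∨ k = n - 1 then
      eqToHom (diskX_eq B0 h) ≫ φ ≫ eqToHom (diskX_eq C0 h).symm else 0
  comm' i j hij := by
    by_cases hd : i = n ∧ j = n - 1
    · obtain ⟨h1, h2⟩ := hd
      subst h1; subst h2
      rw [disk_d_eq B0 ⟨rfl, rfl⟩, disk_d_eq C0 ⟨rfl, rfl⟩]
      beta_reduce
      rw [dif_pos (Or.inl rfl : i = i ∨ i = i - 1),
        dif_pos (Or.inr rfl : i - 1 = i ∨ i - 1 = i - 1)]
      dsimp only [disk]
      simp
    · rw [disk_d_eq_zero B0 hd, disk_d_eq_zero C0 hd, zero_comp, comp_zero]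

@[simp] lemma diskMap_f_in {n k : ℤ} {B0 C0 : A} (φ : B0 ⟶ C0) (h : k = n ∨ k = n - 1) :
    (diskMap n φ).f k = eqToHom (diskX_eq B0 h) ≫ φ ≫ eqToHom (diskX_eq C0 h).symm := by
  show dite _ _ _ = _
  exact dif_pos h

lemma diskMap_f_out {n k : ℤ} {B0 C0 : A} (φ : B0 ⟶ C0) (h : ¬(k = n ∨ k = n - 1)) :
    (diskMap n φ).f k = 0 := by
  show dite _ _ _ = _
  rw [dif_neg h]

lemma diskMap_comp {n : ℤ} {B0 C0 D0 : A} (φ : B0 ⟶ C0) (ψ : C0 ⟶ D0) :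
    diskMap n φ ≫ diskMap n ψ = diskMap n (φ ≫ ψ) := by
  ext k
  by_cases h : k = n ∨ k = n - 1
  · simp only [HomologicalComplex.comp_f, diskMap_f_in _ h]
    dsimp only [disk]
    simp
  · simp [diskMap_f_out _ h]

lemma diskMap_zero {n : ℤ} {B0 C0 : A} : diskMap n (0 : B0 ⟶ C0) = 0 := by
  ext k
  by_cases h : k = n ∨ k = n - 1
  · simp [diskMap_f_in _ h]
    rfl
  · simp [diskMap_f_out _ h]

/-- The counit map `D^n (Y_n) ⟶ Y`. -/
noncomputable def diskCounit (Y : ChainComplex A ℤ) (n : ℤ) : disk n (Y.X n) ⟶ Y where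
  f k := if h : k = n then eqToHom (by subst h; exact diskX_eq _ (Or.inl rfl))
    else if h' : k = n - 1 then
      eqToHom (diskX_eq (Y.X n) (Or.inr h')) ≫ Y.d n (n - 1) ≫ eqToHom (by rw [h'])
    else 0
  comm' i j hij := by
    have hj : j = i - 1 := by
      simp only [ComplexShape.down_Rel] at hij; omega
    subst hj
    by_cases h1 : i = n
    · subst h1
      rw [disk_d_eq (Y.X i) ⟨rfl, rfl⟩]
      beta_reduce
      rw [dif_pos rfl, dif_neg (show ¬ i - 1 = i by omega), dif_pos rfl]
      dsimp only [disk]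
      simp
    · rw [disk_d_eq_zero (Y.X n) (by tauto), zero_comp]
      beta_reduce
      rw [dif_neg h1]
      by_cases h2 : i = n - 1
      · rw [dif_pos h2]
        subst h2
        simp
      · rw [dif_neg h2, zero_comp]

lemma diskCounit_f_self (Y : ChainComplex A ℤ) (n : ℤ) :
    (diskCounit Y n).f n = eqToHom (diskX_eq _ (Or.inl rfl)) := by
  show dite _ _ _ = _
  exact dif_pos rfl

lemma disk_shortExact {B0 e C0 : A} (n : ℤ) (i : B0 ⟶ e) (p : e ⟶ C0) (w : i ≫ p = 0)
    (hS : (ShortComplex.mk i p w).ShortExact) :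
    (ShortComplex.mk (diskMap n i) (diskMap n p)
      (by rw [diskMap_comp, w, diskMap_zero])).ShortExact := by
  apply HomologicalComplex.shortExact_of_degreewise_shortExact
  intro k
  by_cases h : k = n ∨ k = n - 1
  · refine ShortComplex.shortExact_of_iso ?_ hS
    refine ShortComplex.isoMk (eqToIso (diskX_eq B0 h).symm) (eqToIso (diskX_eq e h).symm)
      (eqToIso (diskX_eq C0 h).symm) ?_ ?_
    · change (eqToIso _).hom ≫ (diskMap n i).f k = i ≫ (eqToIso _).hom
      rw [diskMap_f_in i h]
      dsimp only [disk]
      simp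
    · change (eqToIso _).hom ≫ (diskMap n p).f k = p ≫ (eqToIso _).hom
      rw [diskMap_f_in p h]
      dsimp only [disk]
      simp
  · have z1 := diskX_isZero B0 h
    have z2 := diskX_isZero e h
    have z3 := diskX_isZero C0 h
    refine ShortComplex.ShortExact.mk' (ShortComplex.exact_of_isZero_X₂ _ z2)
      ⟨fun g h' _ => z1.eq_of_tgt g h'⟩ ⟨fun g h' _ => z3.eq_of_src g h'⟩

/-- Transfer of `Ext¹`-vanishing from the disk to each degree. -/
lemma ext1Vanishes_of_disk {Y : ChainComplex A ℤ} {C0 : A} {n : ℤ}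
    (h : Ext1Vanishes (disk n C0) Y) : Ext1Vanishes C0 (Y.X n) := by
  intro e i p w hS
  have hSd := disk_shortExact n i p w hS
  set δ := diskCounit Y n with hδ
  have hSE := shortExact_pushout (diskMap n i) (diskMap n p) _ hSd δ
    (pushout.inl δ (diskMap n i)) (pushout.inr δ (diskMap n i))
    (IsPushout.of_hasPushout δ (diskMap n i))
    (pushout.desc 0 (diskMap n p) (by rw [comp_zero, diskMap_comp, w, diskMap_zero]))
    (by rw [pushout.inl_desc]) (by rw [pushout.inr_desc])
  obtain ⟨r, hr⟩ := Ext1Vanishes.retraction h _ _ _ hSE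
  have hrel : diskMap n i ≫ pushout.inr δ (diskMap n i) ≫ r = δ := by
    rw [← Category.assoc, ← pushout.condition, Category.assoc, hr, Category.comp_id]
  have hcomp := congrArg (fun (α : disk n (Y.X n) ⟶ Y) => α.f n) hrel
  dsimp at hcomp
  rw [diskMap_f_in i (Or.inl rfl), diskCounit_f_self] at hcomp
  refine section_of_retraction i p w hS
    (eqToHom (diskX_eq (n := n) (k := n) e (Or.inl rfl)).symm ≫
      (pushout.inr δ (diskMap n i) ≫ r).f n) ?_
  have h4 : eqToHom (diskX_eq (n := n) (k := n) (Y.X n) (Or.inl rfl)) ≫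
      (i ≫ eqToHom (diskX_eq (n := n) (k := n) e (Or.inl rfl)).symm ≫
        (pushout.inr δ (diskMap n i) ≫ r).f n) =
      eqToHom (diskX_eq (n := n) (k := n) (Y.X n) (Or.inl rfl)) ≫ 𝟙 (Y.X n) := by
    rw [Category.comp_id]
    dsimp only [disk] at hcomp ⊢
    erw [HomologicalComplex.comp_f]
    simpa [Category.assoc] using hcomp
  exact (cancel_epi _).1 h4

/-- Partial splitting data for degrees `≥ n`. -/
def SplittingData (X E : ChainComplex A ℤ) (g : E ⟶ X) (n : ℤ)
    (s : ∀ m : ℤ, X.X m ⟶ E.X m) : Prop :=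
  (∀ m, n ≤ m → s m ≫ g.f m = 𝟙 (X.X m)) ∧
  (∀ m, n ≤ m → X.iCycles m ≫ s m ≫ E.d m (m - 1) = 0) ∧
  (∀ m, n < m → X.d m (m - 1) ≫ s (m - 1) = s m ≫ E.d m (m - 1))

lemma splittingData_base {X E : ChainComplex A ℤ} (g : E ⟶ X) (N : ℤ)
    (hN : ∀ n > N, IsZero (X.X n)) (hZtop : IsZero (X.cycles N))
    (hsecN : ∃ σ : X.X N ⟶ E.X N, σ ≫ g.f N = 𝟙 (X.X N)) :
    ∃ s, SplittingData X E g N s := by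
  obtain ⟨σ, hσ⟩ := hsecN
  refine ⟨fun m => if h : m = N then
    eqToHom (congrArg X.X h) ≫ σ ≫ eqToHom (congrArg E.X h.symm) else 0, ?_, ?_, ?_⟩
  · intro m hm
    by_cases h : m = N
    · subst h; beta_reduce; rw [dif_pos rfl]; simpa using hσ
    · beta_reduce; rw [dif_neg h]
      exact (hN m (by omega)).eq_of_src _ _
  · intro m hm
    by_cases h : m = N
    · subst h; beta_reduce; rw [dif_pos rfl]
      simp only [eqToHom_refl, Category.comp_id, Category.id_comp]
      exact hZtop.eq_of_src _ _
    · beta_reduce; rw [dif_neg h]; simp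
  · intro m hm
    exact (hN m (by omega)).eq_of_src _ _

lemma splittingData_step {X Y E : ChainComplex A ℤ} (f : Y ⟶ E) (g : E ⟶ X)
    (wfg : ∀ m, f.f m ≫ g.f m = 0)
    (hdeg : ∀ m, (ShortComplex.mk (f.f m) (g.f m) (wfg m)).ShortExact)
    (hZ : ∀ m : ℤ, (ShortComplex.mk (X.iCycles m) (X.toCycles m (m - 1))
      (iCycles_comp_toCycles X m)).ShortExact)
    (hsec : ∀ m : ℤ, ∃ σ : X.X m ⟶ E.X m, σ ≫ g.f m = 𝟙 (X.X m))
    (hlift : ∀ (m : ℤ) (v : X.cycles m ⟶ Y.X m), ∃ w', X.iCycles m ≫ w' = v)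
    (n : ℤ) (s : ∀ m : ℤ, X.X m ⟶ E.X m) (hs : SplittingData X E g n s) :
    ∃ s', SplittingData X E g (n - 1) s' ∧ ∀ m, m ≠ n - 1 → s' m = s m := by
  obtain ⟨hret, hinv, hsq⟩ := hs
  have h0 : X.iCycles n ≫ (s n ≫ E.d n (n - 1)) = 0 := hinv n le_rfl
  obtain ⟨φ0, hφ0⟩ := CokernelCofork.IsColimit.desc' (hZ n).gIsCokernel (s n ≫ E.d n (n - 1)) h0
  dsimp at hφ0
  let φ : X.cycles (n - 1) ⟶ E.X (n - 1) := φ0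
  have hφ : X.toCycles n (n - 1) ≫ φ = s n ≫ E.d n (n - 1) := hφ0
  have hepi : Epi (X.toCycles n (n - 1)) := (hZ n).epi_g
  have hφg : φ ≫ g.f (n - 1) = X.iCycles (n - 1) := by
    rw [← cancel_epi (X.toCycles n (n - 1)), ← Category.assoc, hφ, Category.assoc,
      ← g.comm n (n - 1), ← Category.assoc, hret n le_rfl, Category.id_comp,
      ← X.toCycles_i n (n - 1)]
  obtain ⟨σ', hσ'⟩ := hsec (n - 1)
  have hρg : (φ - X.iCycles (n - 1) ≫ σ') ≫ g.f (n - 1) = 0 := by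
    rw [Preadditive.sub_comp, hφg, Category.assoc, hσ', Category.comp_id, sub_self]
  obtain ⟨v, hv⟩ := KernelFork.IsLimit.lift' (hdeg (n - 1)).fIsKernel _ hρg
  dsimp at hv
  obtain ⟨w', hw'⟩ := hlift (n - 1) v
  set snew : X.X (n - 1) ⟶ E.X (n - 1) := σ' + w' ≫ f.f (n - 1) with hsnew
  have hretnew : snew ≫ g.f (n - 1) = 𝟙 (X.X (n - 1)) := by
    rw [hsnew, Preadditive.add_comp, hσ', Category.assoc, wfg, comp_zero, add_zero]
  have hkey : X.iCycles (n - 1) ≫ snew = φ := by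
    rw [hsnew, Preadditive.comp_add, ← Category.assoc, hw', hv]
    abel
  have hsqnew : X.d n (n - 1) ≫ snew = s n ≫ E.d n (n - 1) := by
    rw [← X.toCycles_i n (n - 1), Category.assoc, hkey, hφ]
  have hinvnew : X.iCycles (n - 1) ≫ snew ≫ E.d (n - 1) (n - 1 - 1) = 0 := by
    rw [← Category.assoc, hkey, ← cancel_epi (X.toCycles n (n - 1)), ← Category.assoc, hφ,
      Category.assoc, HomologicalComplex.d_comp_d, comp_zero, comp_zero]
  refine ⟨fun m => if h : m = n - 1 then
      eqToHom (congrArg X.X h) ≫ snew ≫ eqToHom (congrArg E.X h.symm) else s m,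
    ⟨?_, ?_, ?_⟩, fun m hm => dif_neg hm⟩
  · intro m hm
    by_cases h : m = n - 1
    · subst h; beta_reduce; rw [dif_pos rfl]; simpa using hretnew
    · beta_reduce; rw [dif_neg h]
      exact hret m (by omega)
  · intro m hm
    by_cases h : m = n - 1
    · subst h; beta_reduce; rw [dif_pos rfl]
      simpa using hinvnew
    · beta_reduce; rw [dif_neg h]
      exact hinv m (by omega)
  · intro m hm
    by_cases h : m = n
    · subst h
      beta_reduce
      rw [dif_pos rfl, dif_neg (show ¬ m = m - 1 by omega)]
      simpa using hsqnew
    · beta_reduce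
      rw [dif_neg (show ¬ m - 1 = n - 1 by omega), dif_neg (show ¬ m = n - 1 by omega)]
      exact hsq m (by omega)

theorem cotorsionPair_bddAbove_acyclic_of_disks
    [HasLimits A] [HasColimits A]
    (𝒳 𝒴 : Set (ChainComplex A ℤ))
    (h𝒳 : ∀ K, K ∈ 𝒳 ↔ ∀ L ∈ 𝒴, Ext1Vanishes K L)
    (h𝒴 : ∀ L, L ∈ 𝒴 ↔ ∀ K ∈ 𝒳, Ext1Vanishes K L)
    (𝒞 : Set A)
    (hD : ∀ (n : ℤ) (C : A), C ∈ 𝒞 → disk n C ∈ 𝒳)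
    (X : ChainComplex A ℤ) (hbdd : ∃ N : ℤ, ∀ n > N, IsZero (X.X n))
    (hacyclic : ∀ n, X.ExactAt n)
    (hcycles : ∀ n, X.cycles n ∈ 𝒞) :
    X ∈ 𝒳 := by
  classical
  obtain ⟨N, hN⟩ := hbdd
  rw [h𝒳]
  intro Y hY E f g w hSE
  have wfg : ∀ m : ℤ, f.f m ≫ g.f m = 0 := fun m => by
    have := congrArg (fun (α : Y ⟶ X) => α.f m) w
    simpa using this
  have hdeg : ∀ m, (ShortComplex.mk (f.f m) (g.f m) (wfg m)).ShortExact := fun m =>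
    (HomologicalComplex.shortExact_iff_degreewise_shortExact _).1 hSE m
  have hext : ∀ (m k : ℤ), Ext1Vanishes (X.cycles k) (Y.X m) := fun m k =>
    ext1Vanishes_of_disk ((h𝒳 _).1 (hD m _ (hcycles k)) Y hY)
  have hZ : ∀ m : ℤ, (ShortComplex.mk (X.iCycles m) (X.toCycles m (m - 1))
      (iCycles_comp_toCycles X m)).ShortExact := fun m =>
    cycles_shortExact X m (hacyclic (m - 1))
  have hsec : ∀ m : ℤ, ∃ σ : X.X m ⟶ E.X m, σ ≫ g.f m = 𝟙 (X.X m) := fun m =>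
    section_of_ext (f.f m) (g.f m) (wfg m) (hdeg m) (X.iCycles m) (X.toCycles m (m - 1)) _
      (hZ m) (hext m m) (hext m (m - 1))
  have hlift : ∀ (m : ℤ) (v : X.cycles m ⟶ Y.X m), ∃ w', X.iCycles m ≫ w' = v := fun m v =>
    lift_of_ext (X.iCycles m) (X.toCycles m (m - 1)) _ (hZ m) (hext m (m - 1)) v
  have hbase : ∃ s, SplittingData X E g N s :=
    splittingData_base g N hN
      (isZero_cycles_of_isZero X N (hN (N + 1) (by omega)) (hacyclic N)) (hsec N)
  let sol : ∀ k : ℕ, {s : ∀ m : ℤ, X.X m ⟶ E.X m // SplittingData X E g (N - (k : ℤ)) s} :=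
    fun k => Nat.rec
      (motive := fun _k => {s : ∀ m : ℤ, X.X m ⟶ E.X m // SplittingData X E g (N - (_k : ℤ)) s})
      ⟨hbase.choose, by simpa using hbase.choose_spec⟩
      (fun k ih =>
        ⟨(splittingData_step f g wfg hdeg hZ hsec hlift (N - (k : ℤ)) ih.1 ih.2).choose,
          by
            have h1 :=
              (splittingData_step f g wfg hdeg hZ hsec hlift
                (N - (k : ℤ)) ih.1 ih.2).choose_spec.1
            have e : N - ((k + 1 : ℕ) : ℤ) = N - (k : ℤ) - 1 := by push_cast; ring
            rw [e]; exact h1⟩) k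
  have hsol : ∀ k : ℕ, SplittingData X E g (N - (k : ℤ)) (sol k).1 := fun k => (sol k).2
  have hstep : ∀ k : ℕ, ∀ m : ℤ, m ≠ N - (k : ℤ) - 1 → (sol (k + 1)).1 m = (sol k).1 m :=
    fun k =>
      (splittingData_step f g wfg hdeg hZ hsec hlift
        (N - (k : ℤ)) (sol k).1 (sol k).2).choose_spec.2
  have stab : ∀ (k j : ℕ), k ≤ j → ∀ m : ℤ, N - (k : ℤ) ≤ m → (sol j).1 m = (sol k).1 m := by
    intro k j hkj
    induction j with
    | zero =>
      intro m _
      have hk0 : k = 0 := by omega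
      subst hk0; rfl
    | succ j ih =>
      intro m hm
      by_cases hkj' : k = j + 1
      · subst hkj'; rfl
      · have hk : k ≤ j := by omega
        have hcast : (k : ℤ) ≤ (j : ℤ) := by exact_mod_cast hk
        have h1 : (sol (j + 1)).1 m = (sol j).1 m := hstep j m (by omega)
        rw [h1]
        exact ih hk m hm
  let K : ℤ → ℕ := fun m => (N - m + 1).toNat
  have hKle : ∀ m : ℤ, N - (K m : ℤ) ≤ m - 1 := by
    intro m
    show N - ((N - m + 1).toNat : ℤ) ≤ m - 1
    omega
  have hKmono : ∀ m : ℤ, K m ≤ K (m - 1) := by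
    intro m
    show (N - m + 1).toNat ≤ (N - (m - 1) + 1).toNat
    omega
  refine ⟨⟨fun m => (sol (K m)).1 m, ?_⟩, ?_⟩
  · intro i j hij
    have hj : j = i - 1 := by simp only [ComplexShape.down_Rel] at hij; omega
    subst hj
    have hsq := (hsol (K (i - 1))).2.2 i (by have := hKle (i - 1); omega)
    have e1 : (sol (K (i - 1))).1 i = (sol (K i)).1 i :=
      stab (K i) (K (i - 1)) (hKmono i) i (by have := hKle i; omega)
    show (sol (K i)).1 i ≫ E.d i (i - 1) = X.d i (i - 1) ≫ (sol (K (i - 1))).1 (i - 1)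
    rw [← e1]
    exact hsq.symm
  · ext m
    have hr := (hsol (K m)).1 m (by have := hKle m; omega)
    simpa using hr
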